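/- Let η, r be real numbers with 0 < η < 1 and 0 < r ≤ −(1/2)·ln η. Then there exists δ > 0 such that for all real θ with 0 < |θ − π| < δ, |H₀ᵖ(θ)| < |H₀(θ)|, where H₀ᵖ(θ) = (e^{iθ}/√η + e^{2r}√η)/(e^{2r} + e^{iθ}) and H₀(θ) = (√η + e^{iθ}/√η)/(1 + e^{iθ}). -/

import Mathlib

open Filter Topology

private lemma exp_ne_neg_one_near (θ : ℝ) (hne : θ ≠ Real.pi)
    (hclose : |θ - Real.pi| < 1) : Complex.exp (θ * Complex.I) ≠ -1 := by
  intro h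
  rw [← Complex.exp_pi_mul_I, Complex.exp_eq_exp_iff_exists_int] at h
  obtain ⟨n, hn⟩ := h
  have hI : (θ : ℂ) = (Real.pi : ℂ) + n * (2 * Real.pi) := by
    apply mul_right_cancel₀ Complex.I_ne_zero
    rw [hn]; ring
  have hR : θ = Real.pi + n * (2 * Real.pi) := by exact_mod_cast hI
  rcases eq_or_ne n 0 with h0 | h0
  · subst h0; simp at hR; exact hne hR
  · have h1le : (1:ℝ) ≤ |(n:ℝ)| := by exact_mod_cast Int.one_le_abs h0
    have habs : |θ - Real.pi| = |(n:ℝ)| * (2 * Real.pi) := by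
      rw [hR, show Real.pi + (n:ℝ) * (2 * Real.pi) - Real.pi = (n:ℝ) * (2 * Real.pi) by ring,
        abs_mul, abs_of_pos Real.two_pi_pos]
    nlinarith [Real.pi_gt_three]

/-- Near the carrier resonance `θ = π`, the phase-sensitive oscillator suppresses
in-coupled phase noise relative to the phase-insensitive one: there is `δ > 0`
such that `|H₀ᵖ(θ)| < |H₀(θ)|` for all `θ` with `0 < |θ − π| < δ`. -/
theorem stmt_18 (η r : ℝ) (hη0 : 0 < η) (hη1 : η < 1)
    (hr0 : 0 < r) (hr : r ≤ -(1 / 2) * Real.log η) :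
    ∃ δ : ℝ, 0 < δ ∧ ∀ θ : ℝ, 0 < |θ - Real.pi| → |θ - Real.pi| < δ →
      ‖((Complex.exp (θ * Complex.I) / (Real.sqrt η : ℂ)
            + ((Real.exp (2 * r) : ℝ) : ℂ) * (Real.sqrt η : ℂ))
          / (((Real.exp (2 * r) : ℝ) : ℂ) + Complex.exp (θ * Complex.I)))‖
      < ‖(((Real.sqrt η : ℂ)
            + Complex.exp (θ * Complex.I) / (Real.sqrt η : ℂ))
          / (1 + Complex.exp (θ * Complex.I)))‖ := by
  set s : ℝ := Real.sqrt η with hs_def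
  set A : ℝ := Real.exp (2 * r) with hA_def
  have hs0 : 0 < s := Real.sqrt_pos.mpr hη0
  have hs1 : s < 1 := by
    rw [hs_def, show (1:ℝ) = Real.sqrt 1 by simp]
    exact Real.sqrt_lt_sqrt hη0.le hη1
  have hA1 : 1 < A := Real.one_lt_exp_iff.mpr (by linarith)
  set E : ℝ → ℂ := fun θ => Complex.exp (θ * Complex.I) with hE_def
  have hEcont : Continuous E :=
    (Complex.continuous_ofReal.mul continuous_const).cexp
  have hEpi : E Real.pi = -1 := Complex.exp_pi_mul_I
  set Hp : ℝ → ℂ := fun θ => (E θ / (s:ℂ) + (A:ℂ) * (s:ℂ)) / ((A:ℂ) + E θ) with hHp_def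
  set H : ℝ → ℂ := fun θ => ((s:ℂ) + E θ / (s:ℂ)) / (1 + E θ) with hH_def
  -- continuity of |Hp| at π
  have hdenp : (A:ℂ) + E Real.pi ≠ 0 := by
    rw [hEpi]
    intro h
    have h1 : (A:ℂ) = 1 := by linear_combination h
    have : A = 1 := by exact_mod_cast h1
    linarith
  have hHpcont : ContinuousAt (fun θ => ‖Hp θ‖) Real.pi := by
    apply continuous_norm.continuousAt.comp
    exact ContinuousAt.div (by fun_prop) (by fun_prop) hdenp
  set Lp : ℝ := ‖Hp Real.pi‖ with hLp_def
  have hev1 : ∀ᶠ θ in 𝓝[≠] Real.pi, ‖Hp θ‖ < Lp + 1 :=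
    nhdsWithin_le_nhds (hHpcont.tendsto.eventually_lt_const (by linarith))
  -- the denominator of H is eventually nonzero
  have hclose : ∀ᶠ θ : ℝ in 𝓝 Real.pi, |θ - Real.pi| < 1 := by
    have h1 : Tendsto (fun θ : ℝ => |θ - Real.pi|) (𝓝 Real.pi) (𝓝 |Real.pi - Real.pi|) :=
      ((continuous_id.sub continuous_const).abs).continuousAt
    simp only [sub_self, abs_zero] at h1
    exact h1.eventually_lt_const one_pos
  have hevne : ∀ᶠ θ in 𝓝[≠] Real.pi, (1 : ℂ) + E θ ≠ 0 := by
    rw [eventually_nhdsWithin_iff]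
    filter_upwards [hclose] with θ hθ hne h0
    exact exp_ne_neg_one_near θ (by simpa using hne) hθ (by
      show E θ = -1
      linear_combination h0)
  -- numerator of H tends to a positive limit
  have hmval : ‖(s:ℂ) + E Real.pi / (s:ℂ)‖ = 1/s - s := by
    rw [hEpi, show (s:ℂ) + (-1)/(s:ℂ) = ((s - 1/s : ℝ) : ℂ) by push_cast; ring,
      Complex.norm_real, Real.norm_eq_abs, abs_of_neg]
    · ring
    · have : 1 < 1/s := one_lt_one_div hs0 hs1
      linarith
  have hm : 0 < ‖(s:ℂ) + E Real.pi / (s:ℂ)‖ := by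
    rw [hmval]
    have : 1 < 1/s := one_lt_one_div hs0 hs1
    linarith
  have hnum : Tendsto (fun θ => ‖(s:ℂ) + E θ / (s:ℂ)‖) (𝓝[≠] Real.pi)
      (𝓝 ‖(s:ℂ) + E Real.pi / (s:ℂ)‖) :=
    ((continuous_norm.comp (continuous_const.add (hEcont.div_const _))).continuousAt.tendsto).mono_left
      nhdsWithin_le_nhds
  -- denominator of H tends to 0 from the right (in abs)
  have hden : Tendsto (fun θ => ‖1 + E θ‖) (𝓝[≠] Real.pi) (𝓝[>] 0) := by
    rw [tendsto_nhdsWithin_iff]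
    constructor
    · have h1 : Tendsto (fun θ => ‖1 + E θ‖) (𝓝 Real.pi)
          (𝓝 ‖1 + E Real.pi‖) :=
        (continuous_norm.comp (continuous_const.add hEcont)).continuousAt
      rw [hEpi] at h1
      simpa using h1.mono_left nhdsWithin_le_nhds
    · filter_upwards [hevne] with θ h
      exact Set.mem_Ioi.mpr (norm_pos_iff.mpr h)
  have hinv : Tendsto (fun θ => (‖1 + E θ‖)⁻¹) (𝓝[≠] Real.pi) atTop :=
    tendsto_inv_nhdsGT_zero.comp hden
  have hHtop : Tendsto (fun θ => ‖H θ‖) (𝓝[≠] Real.pi) atTop := by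
    have := Tendsto.pos_mul_atTop hm hnum hinv
    refine this.congr (fun θ => ?_)
    rw [hH_def]
    simp only [norm_div, div_eq_mul_inv, norm_mul, norm_inv]
  have hev2 : ∀ᶠ θ in 𝓝[≠] Real.pi, Lp + 1 < ‖H θ‖ :=
    hHtop.eventually_gt_atTop (Lp + 1)
  have hev : ∀ᶠ θ in 𝓝[≠] Real.pi, ‖Hp θ‖ < ‖H θ‖ := by
    filter_upwards [hev1, hev2] with θ h1 h2
    linarith
  obtain ⟨ε, hε, hsub⟩ := Metric.mem_nhdsWithin_iff.mp hev
  refine ⟨ε, hε, fun θ h1 h2 => ?_⟩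
  have hθmem : θ ∈ Metric.ball Real.pi ε ∩ {Real.pi}ᶜ := by
    constructor
    · rw [Metric.mem_ball, Real.dist_eq]; exact h2
    · simp [sub_ne_zero.mp (abs_pos.mp h1)]
  have := hsub hθmem
  simpa [Hp, H, E] using this
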